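/- Let σ ≥ 1 and c ≥ 1 be real numbers, and let h > 0, ρ > 0. Let z, z_b, z_e ∈ ℝ² with z_b ≠ z_e, and suppose: (i) the distance from z to the affine line through z_b and z_e is at least ρ; (ii) the triangle T = conv{z, z_b, z_e} has diameter at most h; (iii) h ≤ c · dist(z_b, z_e); and (iv) h ≤ σ · ρ. Then there exists a point x ∈ T such that the closed ball centered at x with radius diam(T)/(3 c σ) is contained in T; i.e. the ratio of the diameter of T to its inradius is at most 3 c σ. -/

import Mathlib

open Metric MeasureTheory

lemma enorm_sq' (u : EuclideanSpace ℝ (Fin 2)) : ‖u‖ ^ 2 = u 0 ^ 2 + u 1 ^ 2 := by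
  rw [EuclideanSpace.norm_eq, Real.sq_sqrt (by positivity)]
  simp [Fin.sum_univ_two]

lemma det_abs_le' (u w : EuclideanSpace ℝ (Fin 2)) :
    |u 0 * w 1 - u 1 * w 0| ≤ ‖u‖ * ‖w‖ := by
  have h1 : (u 0 * w 1 - u 1 * w 0) ^ 2 ≤ (‖u‖ * ‖w‖) ^ 2 := by
    rw [mul_pow, enorm_sq', enorm_sq']
    nlinarith [sq_nonneg (u 0 * w 0 + u 1 * w 1)]
  have h2 : (0:ℝ) ≤ ‖u‖ * ‖w‖ := by positivity
  nlinarith [abs_nonneg (u 0 * w 1 - u 1 * w 0), sq_abs (u 0 * w 1 - u 1 * w 0)]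

lemma decomp_bound' (f : EuclideanSpace ℝ (Fin 2) →ₗ[ℝ] ℝ) (e m : EuclideanSpace ℝ (Fin 2))
    (hf0 : f e = 0) (hf1 : f m = 1) (u : EuclideanSpace ℝ (Fin 2)) :
    |f u| * |e 0 * m 1 - e 1 * m 0| ≤ ‖u‖ * ‖e‖ := by
  set D := e 0 * m 1 - e 1 * m 0 with hDdef
  by_cases hD : D = 0
  · rw [hD, abs_zero, mul_zero]; positivity
  · set a := (u 0 * m 1 - u 1 * m 0) / D with ha
    set t := (e 0 * u 1 - e 1 * u 0) / D with ht
    have hu : u = a • e + t • m := by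
      ext j
      have : (a • e + t • m) j = a * e j + t * m j := by
        simp [PiLp.add_apply, PiLp.smul_apply, smul_eq_mul]
      rw [this, ha, ht, div_mul_eq_mul_div, div_mul_eq_mul_div, ← add_div,
        eq_div_iff hD]
      fin_cases j <;> simp only [Fin.zero_eta, Fin.mk_one, Fin.isValue] <;> ring
    have hfu : f u = t := by
      rw [hu]; simp [hf0, hf1]
    rw [hfu]
    have : |t| * |D| = |e 0 * u 1 - e 1 * u 0| := by
      rw [← abs_mul, ht]
      congr 1
      field_simp
    rw [this]
    calc |e 0 * u 1 - e 1 * u 0| ≤ ‖e‖ * ‖u‖ := det_abs_le' e u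
    _ = ‖u‖ * ‖e‖ := mul_comm _ _

set_option maxHeartbeats 2000000 in
theorem auxiliary_triangle_shape_regular
    (σ c : ℝ) (hσ : 1 ≤ σ) (hc : 1 ≤ c) (h ρ : ℝ) (hh : 0 < h) (hρ : 0 < ρ)
    (z zb ze : EuclideanSpace ℝ (Fin 2)) (hne : zb ≠ ze)
    (hdist : ρ ≤ Metric.infDist z (affineSpan ℝ {zb, ze} : Set (EuclideanSpace ℝ (Fin 2))))
    (hdiam : Metric.diam (convexHull ℝ ({z, zb, ze} : Set (EuclideanSpace ℝ (Fin 2)))) ≤ h)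
    (hE : h ≤ c * dist zb ze) (hσρ : h ≤ σ * ρ) :
    ∃ x ∈ convexHull ℝ ({z, zb, ze} : Set (EuclideanSpace ℝ (Fin 2))),
      Metric.closedBall x
        (Metric.diam (convexHull ℝ ({z, zb, ze} : Set (EuclideanSpace ℝ (Fin 2)))) /
          (3 * c * σ)) ⊆
        convexHull ℝ ({z, zb, ze} : Set (EuclideanSpace ℝ (Fin 2))) := by
  classical
  have hb0 : (0:ℝ) < dist zb ze := dist_pos.mpr hne
  have hznot : z ∉ (affineSpan ℝ ({zb, ze} : Set (EuclideanSpace ℝ (Fin 2))) :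
      Set (EuclideanSpace ℝ (Fin 2))) := by
    intro hmem
    have h0 : Metric.infDist z (affineSpan ℝ ({zb, ze} : Set (EuclideanSpace ℝ (Fin 2))) :
        Set (EuclideanSpace ℝ (Fin 2))) = 0 := Metric.infDist_zero_of_mem hmem
    rw [h0] at hdist; linarith
  have hzzb : z ≠ zb := by
    rintro rfl; exact hznot (left_mem_affineSpan_pair ℝ _ _)
  have hzze : z ≠ ze := by
    rintro rfl; exact hznot (right_mem_affineSpan_pair ℝ _ _)
  have hindep : AffineIndependent ℝ ![z, zb, ze] := by
    rw [affineIndependent_iff_not_collinear_set]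
    intro hcol
    exact hznot (hcol.mem_affineSpan_of_mem_of_ne (by simp) (by simp) (by simp) hne)
  have htop : affineSpan ℝ (Set.range ![z, zb, ze]) = ⊤ :=
    hindep.affineSpan_eq_top_iff_card_eq_finrank_add_one.mpr (by simp)
  set B : AffineBasis (Fin 3) ℝ (EuclideanSpace ℝ (Fin 2)) := ⟨![z, zb, ze], hindep, htop⟩
    with hB
  have hrange : Set.range ⇑B = ({z, zb, ze} : Set (EuclideanSpace ℝ (Fin 2))) := by
    show Set.range ![z, zb, ze] = _
    ext p
    simp only [Set.mem_range, Set.mem_insert_iff, Set.mem_singleton_iff]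
    constructor
    · rintro ⟨i, rfl⟩; fin_cases i <;> simp
    · rintro (rfl | rfl | rfl)
      exacts [⟨0, rfl⟩, ⟨1, rfl⟩, ⟨2, rfl⟩]
  have hhull : convexHull ℝ ({z, zb, ze} : Set (EuclideanSpace ℝ (Fin 2)))
      = {y | ∀ i, 0 ≤ B.coord i y} := by
    rw [← hrange]; exact B.convexHull_eq_nonneg_coord
  -- side lengths
  set L0 := dist zb ze with hL0def
  set L1 := dist z ze with hL1def
  set L2 := dist z zb with hL2def
  have hL1 : (0:ℝ) < L1 := dist_pos.mpr hzze
  have hL2 : (0:ℝ) < L2 := dist_pos.mpr hzzb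
  set P := L0 + L1 + L2 with hPdef
  have hP : (0:ℝ) < P := by positivity
  set w : Fin 3 → ℝ := ![L0 / P, L1 / P, L2 / P] with hwdef
  have hw1 : Finset.univ.sum w = 1 := by
    simp [hwdef, Fin.sum_univ_three]
    field_simp
    exact hPdef.symm
  have hw0 : ∀ i ∈ (Finset.univ : Finset (Fin 3)), 0 ≤ w i := by
    intro i _
    fin_cases i <;> simp [hwdef] <;> positivity
  set x := Finset.univ.affineCombination ℝ ![z, zb, ze] w with hxdef
  have hxT : x ∈ convexHull ℝ ({z, zb, ze} : Set (EuclideanSpace ℝ (Fin 2))) := by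
    rw [← hrange]
    exact affineCombination_mem_convexHull hw0 hw1
  have coordx : ∀ i, B.coord i x = w i := fun i =>
    B.coord_apply_combination_of_mem (Finset.mem_univ i) hw1
  -- the determinant
  set D := (ze 0 - zb 0) * (z 1 - zb 1) - (ze 1 - zb 1) * (z 0 - zb 0) with hDdef
  set S := (ze 0 - zb 0) ^ 2 + (ze 1 - zb 1) ^ 2 with hSdef
  have he2 : L0 ^ 2 = S := by
    rw [hL0def, dist_eq_norm, enorm_sq', hSdef]
    simp only [PiLp.sub_apply]
    ring
  have hS0 : S ≠ 0 := by
    rw [← he2]; positivity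
  have hDlow : ρ * L0 ≤ |D| := by
    set t0 := ((z 0 - zb 0) * (ze 0 - zb 0) + (z 1 - zb 1) * (ze 1 - zb 1)) / S with ht0
    set foot := AffineMap.lineMap zb ze t0 with hfoot
    have hmem : foot ∈ affineSpan ℝ ({zb, ze} : Set (EuclideanSpace ℝ (Fin 2))) :=
      AffineMap.lineMap_mem_affineSpan_pair t0 zb ze
    have hρd : ρ ≤ dist z foot := hdist.trans (Metric.infDist_le_dist_of_mem hmem)
    have hc0 : ∀ j, (z - foot) j = z j - (zb j + t0 * (ze j - zb j)) := by
      intro j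
      simp [hfoot, AffineMap.lineMap_apply, vsub_eq_sub, vadd_eq_add, PiLp.sub_apply,
        PiLp.add_apply, PiLp.smul_apply, smul_eq_mul]
      ring
    have hfd : dist z foot ^ 2 * S = D ^ 2 := by
      rw [dist_eq_norm, enorm_sq', hc0 0, hc0 1, ht0]
      field_simp
      ring
    have hsq : (ρ * L0) ^ 2 ≤ D ^ 2 := by
      rw [← hfd, ← he2]
      have : ρ ^ 2 ≤ dist z foot ^ 2 := by nlinarith [dist_nonneg (x := z) (y := foot)]
      nlinarith [sq_nonneg L0]
    nlinarith [abs_nonneg D, sq_abs D, mul_nonneg hρ.le hb0.le]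
  have hD0 : (0:ℝ) < |D| := lt_of_lt_of_le (by positivity) hDlow
  have hlinB : ∀ (i : Fin 3) (p q : EuclideanSpace ℝ (Fin 2)),
      (B.coord i).linear (p - q) = B.coord i p - B.coord i q := by
    intro i p q
    have hv := AffineMap.linearMap_vsub (B.coord i) p q
    rwa [vsub_eq_sub, vsub_eq_sub] at hv
  have hcB : ∀ i j : Fin 3, B.coord i (![z, zb, ze] j) = if i = j then 1 else 0 := fun i j =>
    B.coord_apply i j
  have cz : ∀ i : Fin 3, B.coord i z = if i = 0 then 1 else 0 := by
    intro i; have hv : B.coord i z = if i = 0 then 1 else 0 := hcB i 0; exact hv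
  have czb : ∀ i : Fin 3, B.coord i zb = if i = 1 then 1 else 0 := by
    intro i; have hv : B.coord i zb = if i = 1 then 1 else 0 := hcB i 1; exact hv
  have cze : ∀ i : Fin 3, B.coord i ze = if i = 2 then 1 else 0 := by
    intro i; have hv : B.coord i ze = if i = 2 then 1 else 0 := hcB i 2; exact hv
  have hkey : ∀ (i : Fin 3) (u : EuclideanSpace ℝ (Fin 2)),
      |(B.coord i).linear u| * |D| ≤ ‖u‖ * ![L0, L1, L2] i := by
    intro i u
    fin_cases i
    · have hf0 : (B.coord 0).linear (ze - zb) = 0 := by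
        rw [hlinB, cze, czb]
        simp
      have hf1 : (B.coord 0).linear (z - zb) = 1 := by
        rw [hlinB, cz, czb]
        simp
      have hdet : (ze - zb) 0 * (z - zb) 1 - (ze - zb) 1 * (z - zb) 0 = D := by
        simp only [PiLp.sub_apply, hDdef]; try ring
      have hnrm : ‖ze - zb‖ = L0 := by rw [hL0def, dist_eq_norm, norm_sub_rev]
      have hbd := decomp_bound' (B.coord 0).linear (ze - zb) (z - zb) hf0 hf1 u
      rw [hdet, hnrm] at hbd
      simpa using hbd
    · have hf0 : (B.coord 1).linear (ze - z) = 0 := by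
        rw [hlinB, cze, cz]
        simp
      have hf1 : (B.coord 1).linear (zb - z) = 1 := by
        rw [hlinB, czb, cz]
        simp
      have hdet : (ze - z) 0 * (zb - z) 1 - (ze - z) 1 * (zb - z) 0 = -D := by
        simp only [PiLp.sub_apply, hDdef]; try ring
      have hnrm : ‖ze - z‖ = L1 := by rw [hL1def, dist_eq_norm, norm_sub_rev]
      have hbd := decomp_bound' (B.coord 1).linear (ze - z) (zb - z) hf0 hf1 u
      rw [hdet, abs_neg, hnrm] at hbd
      simpa using hbd
    · have hf0 : (B.coord 2).linear (zb - z) = 0 := by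
        rw [hlinB, czb, cz]
        simp
      have hf1 : (B.coord 2).linear (ze - z) = 1 := by
        rw [hlinB, cze, cz]
        simp
      have hdet : (zb - z) 0 * (ze - z) 1 - (zb - z) 1 * (ze - z) 0 = D := by
        simp only [PiLp.sub_apply, hDdef]; try ring
      have hnrm : ‖zb - z‖ = L2 := by rw [hL2def, dist_eq_norm, norm_sub_rev]
      have hbd := decomp_bound' (B.coord 2).linear (zb - z) (ze - z) hf0 hf1 u
      rw [hdet, hnrm] at hbd
      simpa using hbd
  -- numeric facts
  set dT := Metric.diam (convexHull ℝ ({z, zb, ze} : Set (EuclideanSpace ℝ (Fin 2)))) with hdTdef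
  set r := dT / (3 * c * σ) with hrdef
  have h3cσ : (0:ℝ) < 3 * c * σ := by nlinarith
  have hr0 : (0:ℝ) ≤ r := div_nonneg Metric.diam_nonneg h3cσ.le
  have hTbdd : Bornology.IsBounded (convexHull ℝ ({z, zb, ze} : Set (EuclideanSpace ℝ (Fin 2)))) :=
    isBounded_convexHull.mpr (Set.toFinite _).isBounded
  have hzT : z ∈ convexHull ℝ ({z, zb, ze} : Set (EuclideanSpace ℝ (Fin 2))) :=
    subset_convexHull ℝ _ (by simp)
  have hzbT : zb ∈ convexHull ℝ ({z, zb, ze} : Set (EuclideanSpace ℝ (Fin 2))) :=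
    subset_convexHull ℝ _ (by simp)
  have hzeT : ze ∈ convexHull ℝ ({z, zb, ze} : Set (EuclideanSpace ℝ (Fin 2))) :=
    subset_convexHull ℝ _ (by simp)
  have hL0d : L0 ≤ dT := Metric.dist_le_diam_of_mem hTbdd hzbT hzeT
  have hL1d : L1 ≤ dT := Metric.dist_le_diam_of_mem hTbdd hzT hzeT
  have hL2d : L2 ≤ dT := Metric.dist_le_diam_of_mem hTbdd hzT hzbT
  have hrmul : r * (3 * c * σ) = dT := div_mul_cancel₀ _ (ne_of_gt h3cσ)
  have e2 : 3 * (r * c) ≤ ρ := by nlinarith [hrmul, hdiam, hσρ, hρ, hr0]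
  have hrP : r * P ≤ |D| := by
    have p1 : P ≤ 3 * h := by rw [hPdef]; linarith
    have p2 : r * P ≤ r * (3 * h) := mul_le_mul_of_nonneg_left p1 hr0
    have p3 : r * (3 * h) ≤ r * (3 * (c * L0)) := mul_le_mul_of_nonneg_left (by linarith) hr0
    have p5 : (3 * (r * c)) * L0 ≤ ρ * L0 := mul_le_mul_of_nonneg_right e2 hb0.le
    nlinarith [hDlow]
  -- conclusion
  refine ⟨x, hxT, ?_⟩
  intro y hy
  rw [hhull]
  simp only [Set.mem_setOf_eq]
  intro i
  have hyx : ‖y - x‖ ≤ r := by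
    rw [← dist_eq_norm]; exact Metric.mem_closedBall.mp hy
  have hlin : B.coord i y = w i + (B.coord i).linear (y - x) := by
    rw [hlinB, coordx]; ring
  have hLi : (0:ℝ) < ![L0, L1, L2] i := by
    fin_cases i
    · exact hb0
    · exact hL1
    · exact hL2
  have hwi : w i = ![L0, L1, L2] i / P := by
    fin_cases i <;> simp [hwdef]
  have h6 : |(B.coord i).linear (y - x)| * |D| ≤ r * ![L0, L1, L2] i := by
    calc |(B.coord i).linear (y - x)| * |D| ≤ ‖y - x‖ * ![L0, L1, L2] i := hkey i (y - x)
    _ ≤ r * ![L0, L1, L2] i := mul_le_mul_of_nonneg_right hyx hLi.le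
  have h7 : r * ![L0, L1, L2] i ≤ (![L0, L1, L2] i / P) * |D| := by
    have hq : r * ![L0, L1, L2] i * P ≤ ![L0, L1, L2] i * |D| := by
      nlinarith [mul_le_mul_of_nonneg_left hrP hLi.le]
    calc r * ![L0, L1, L2] i = (r * ![L0, L1, L2] i * P) / P := by field_simp
    _ ≤ (![L0, L1, L2] i * |D|) / P := by gcongr
    _ = (![L0, L1, L2] i / P) * |D| := by ring
  have h8 : |(B.coord i).linear (y - x)| ≤ ![L0, L1, L2] i / P := by
    have h9 := le_trans h6 h7
    exact le_of_mul_le_mul_right h9 hD0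
  rw [hlin, hwi]
  have := neg_abs_le ((B.coord i).linear (y - x))
  linarith
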